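/- Let G be a topological group and B ⊆ G a subgroup such that the coset space B\G (with the quotient topology) is compact. Let F be a finite field with the discrete topology, χ : B → F^* a group homomorphism, and let X be a topological space with a continuous left G-action. Define Ind_B^G(χ) := {f : G → F : f continuous and f(bg) = χ(b)f(g) for all b ∈ B, g ∈ G}, with G acting on Ind_B^G(χ) by (h·f)(g) := f(gh), and endow Ind_B^G(χ) with the discrete topology. Then the map Φ ↦ (x ↦ Φ(x)(1)) is a bijection from the set of continuous G-equivariant maps X → Ind_B^G(χ) onto the set of continuous maps ψ : X → F satisfying ψ(b·x) = χ(b)·ψ(x) for all b ∈ B and x ∈ X; its inverse sends ψ to the map x ↦ (g ↦ ψ(g·x)). -/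

import Mathlib

variable {G : Type*} [Group G] [TopologicalSpace G]
  {F : Type*} [Field F]
  {X : Type*} [TopologicalSpace X]

/-- The smooth induction `Ind_B^G(χ)`: continuous (= locally constant, since `F` is
discrete) functions `f : G → F` with `f(bg) = χ(b)f(g)` for all `b ∈ B`, `g ∈ G`. -/
def IndSet (B : Subgroup G) (χ : B →* Fˣ) : Set (G → F) :=
  {f | IsLocallyConstant f ∧ ∀ (b : B) (g : G), f ((b : G) * g) = (χ b : F) * f g}

/-- The set of continuous `G`-equivariant maps `X → Ind_B^G(χ)`, where `Ind_B^G(χ)`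
carries the discrete topology (so continuity = local constancy) and `G` acts on
`Ind_B^G(χ)` by right translation, `(h·f)(g) = f(gh)`. -/
def EquivariantMaps [MulAction G X] (B : Subgroup G) (χ : B →* Fˣ) :
    Set (X → G → F) :=
  {Φ | (∀ x, Φ x ∈ IndSet B χ) ∧ IsLocallyConstant Φ ∧
    ∀ (h : G) (x : X), Φ (h • x) = fun g => Φ x (g * h)}

/-- The set of continuous maps `ψ : X → F` with `ψ(b·x) = χ(b)ψ(x)`. -/
def ChiEquivariantMaps [MulAction G X] (B : Subgroup G) (χ : B →* Fˣ) :
    Set (X → F) :=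
  {ψ | IsLocallyConstant ψ ∧ ∀ (b : B) (x : X), ψ ((b : G) • x) = (χ b : F) * ψ x}

theorem aux_isOpen_image (B : Subgroup G) (V : Set G) (hV : IsOpen V) [IsTopologicalGroup G] :
    IsOpen (Quotient.mk (QuotientGroup.rightRel B) '' V) := by
  rw [isOpen_coinduced]
  change IsOpen (Quotient.mk (QuotientGroup.rightRel B) ⁻¹' _)
  have : Quotient.mk (QuotientGroup.rightRel B) ⁻¹' (Quotient.mk _ '' V)
      = ⋃ b : B, (fun g => (b : G)⁻¹ * g) '' V := by
    ext g
    simp only [Set.mem_preimage, Set.mem_image, Set.mem_iUnion]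
    constructor
    · rintro ⟨v, hv, hq⟩
      have hb : g * v⁻¹ ∈ B := (QuotientGroup.rightRel_apply).mp (Quotient.eq.mp hq)
      exact ⟨⟨v * g⁻¹, by simpa using B.inv_mem hb⟩, v, hv, by group⟩
    · rintro ⟨b, v, hv, rfl⟩
      exact ⟨v, hv, Quotient.sound ((QuotientGroup.rightRel_apply).mpr (by simp [b.2]))⟩
  rw [this]
  exact isOpen_iUnion fun b => (Homeomorph.mulLeft ((b : G)⁻¹)).isOpenMap V hV

theorem aux_key [IsTopologicalGroup G] (B : Subgroup G)
    (hcompact : CompactSpace (Quotient (QuotientGroup.rightRel B)))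
    (χ : B →* Fˣ) [MulAction G X] [ContinuousSMul G X] {ψ : X → F}
    (hlc : IsLocallyConstant ψ)
    (hchi : ∀ (b : B) (x : X), ψ ((b : G) • x) = (χ b : F) * ψ x) :
    IsLocallyConstant (fun (x : X) (g : G) => ψ (g • x)) := by
  rw [IsLocallyConstant.iff_exists_open]
  intro x
  have hθ : IsLocallyConstant (fun p : G × X => ψ (p.1 • p.2)) :=
    hlc.comp_continuous continuous_smul
  have hch : ∀ g : G, ∃ (V : Set G) (U : Set X), IsOpen V ∧ IsOpen U ∧ g ∈ V ∧ x ∈ U ∧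
      ∀ v ∈ V, ∀ y ∈ U, ψ (v • y) = ψ (g • x) := by
    intro g
    obtain ⟨W, hWopen, hW, hconst⟩ := hθ.exists_open (g, x)
    obtain ⟨V, U, hV, hU, hgV, hxU, hVU⟩ := isOpen_prod_iff.mp hWopen g x hW
    exact ⟨V, U, hV, hU, hgV, hxU, fun v hv y hy => hconst (v, y) (hVU ⟨hv, hy⟩)⟩
  choose V U hVopen hUopen hgV hxU hconst using hch
  -- compactness: finitely many V g cover G up to left B-translation
  have hcover : (Set.univ : Set (Quotient (QuotientGroup.rightRel B))) ⊆
      ⋃ g : G, Quotient.mk _ '' V g := by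
    intro z _
    obtain ⟨g, rfl⟩ := Quotient.exists_rep z
    exact Set.mem_iUnion.mpr ⟨g, g, hgV g, rfl⟩
  obtain ⟨t, ht⟩ := isCompact_univ.elim_finite_subcover
    (fun g : G => Quotient.mk _ '' V g) (fun g => aux_isOpen_image B (V g) (hVopen g)) hcover
  refine ⟨⋂ g ∈ t, U g, isOpen_biInter_finset fun g _ => hUopen g,
    Set.mem_iInter₂.mpr fun g _ => hxU g, ?_⟩
  intro y hy
  funext g
  obtain ⟨g₀, hg₀t, v, hvV, hqv⟩ : ∃ g₀ ∈ t, ∃ v ∈ V g₀,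
      Quotient.mk (QuotientGroup.rightRel B) v = Quotient.mk _ g := by
    have := ht (Set.mem_univ (Quotient.mk (QuotientGroup.rightRel B) g))
    simp only [Set.mem_iUnion, Set.mem_image] at this
    obtain ⟨g₀, hin, v, hv, hq⟩ := this
    exact ⟨g₀, hin, v, hv, hq⟩
  have hb : g * v⁻¹ ∈ B := (QuotientGroup.rightRel_apply).mp (Quotient.eq.mp hqv)
  set b : B := ⟨g * v⁻¹, hb⟩
  have hgbv : g = (b : G) * v := by simp [b, mul_assoc]
  have hyU : y ∈ U g₀ := Set.mem_iInter₂.mp hy g₀ hg₀t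
  calc ψ (g • y) = ψ (((b : G) * v) • y) := by rw [← hgbv]
    _ = (χ b : F) * ψ (v • y) := by rw [mul_smul]; exact hchi b (v • y)
    _ = (χ b : F) * ψ (v • x) := by rw [hconst g₀ v hvV y hyU, hconst g₀ v hvV x (hxU g₀)]
    _ = ψ (((b : G) * v) • x) := by rw [mul_smul]; exact (hchi b (v • x)).symm
    _ = ψ (g • x) := by rw [← hgbv]

/-- Frobenius reciprocity for smooth induction: if `B ⊆ G` is a subgroup with `B\G`
compact, `F` a finite (discrete) field, `χ : B → F^*` a homomorphism and `X` a topological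
space with a continuous left `G`-action, then `Φ ↦ (x ↦ Φ(x)(1))` is a bijection from the
continuous `G`-equivariant maps `X → Ind_B^G(χ)` onto the continuous maps `ψ : X → F` with
`ψ(b·x) = χ(b)ψ(x)`, with inverse `ψ ↦ (x ↦ (g ↦ ψ(g·x)))`. -/
theorem bijOn_evaluation_at_one [IsTopologicalGroup G] [Fintype F]
    (B : Subgroup G) (hcompact : CompactSpace (Quotient (QuotientGroup.rightRel B)))
    (χ : B →* Fˣ)
    [MulAction G X] [ContinuousSMul G X] :
    Set.BijOn (fun (Φ : X → G → F) (x : X) => Φ x 1)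
      (EquivariantMaps B χ) (ChiEquivariantMaps B χ) ∧
    Set.InvOn (fun (ψ : X → F) (x : X) (g : G) => ψ (g • x))
      (fun (Φ : X → G → F) (x : X) => Φ x 1)
      (EquivariantMaps B χ) (ChiEquivariantMaps B χ) := by
  classical
  have hmt1 : Set.MapsTo (fun (Φ : X → G → F) (x : X) => Φ x 1)
      (EquivariantMaps B χ) (ChiEquivariantMaps B χ) := by
    rintro Φ ⟨hInd, hΦlc, hequiv⟩
    refine ⟨hΦlc.comp (fun f => f 1), fun b x => ?_⟩
    show Φ ((b : G) • x) 1 = (χ b : F) * Φ x 1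
    rw [hequiv (b : G) x]
    simpa [one_mul, mul_one] using (hInd x).2 b 1
  have hmt2 : Set.MapsTo (fun (ψ : X → F) (x : X) (g : G) => ψ (g • x))
      (ChiEquivariantMaps B χ) (EquivariantMaps B χ) := by
    rintro ψ ⟨hlc, hchi⟩
    refine ⟨fun x => ⟨hlc.comp_continuous (continuous_id.smul continuous_const),
      fun b g => by show ψ (((b : G) * g) • x) = _; rw [mul_smul]; exact hchi b (g • x)⟩,
      aux_key B hcompact χ hlc hchi, fun h x => ?_⟩
    funext g
    show ψ (g • h • x) = ψ ((g * h) • x)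
    rw [mul_smul]
  have hinv : Set.InvOn (fun (ψ : X → F) (x : X) (g : G) => ψ (g • x))
      (fun (Φ : X → G → F) (x : X) => Φ x 1)
      (EquivariantMaps B χ) (ChiEquivariantMaps B χ) := by
    constructor
    · rintro Φ ⟨hInd, hΦlc, hequiv⟩
      funext x g
      show Φ (g • x) 1 = Φ x g
      rw [hequiv g x]
      show Φ x (1 * g) = Φ x g
      rw [one_mul]
    · rintro ψ ⟨hlc, hchi⟩
      funext x
      show ψ ((1 : G) • x) = ψ x
      rw [one_smul]
  exact ⟨hinv.bijOn hmt1 hmt2, hinv⟩
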